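/- In dimension d = 1, for q ≥ 0 and assuming (λ q)^{-1/(η+1)} ≥ B_min whenever λ q > 1, the function F_0(q) := inf_{γ < 0} {Σ*(γ) q + c_β*(γ)} satisfies F_0(q) = σ² q if λ q ≤ 1, and F_0(q) = (σ²/(λ η)) ((1+η)(λ q)^{η/(1+η)} - 1) if λ q > 1, where Σ*(γ) = Σ(b*(γ)) and c_β*(γ) = c_β(b*(γ)) with b*(γ) = min(1, max((λ γ⁻)^{-1/(η+1)}, B_min)). -/

import Mathlib

open Real

lemma bern (et x : ℝ) (he : 1 ≤ et) (hx : 0 < x) : 1 + et * (1 - x) ≤ x ^ (-et) := by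
  have hinv : 0 < x⁻¹ := inv_pos.mpr hx
  have h1 : (-1 : ℝ) ≤ x⁻¹ - 1 := by linarith
  have hber := one_add_mul_self_le_rpow_one_add h1 he
  have hx2 : 1 + (x⁻¹ - 1) = x⁻¹ := by ring
  rw [hx2] at hber
  have hxe : x⁻¹ ^ et = x ^ (-et) := by
    rw [Real.rpow_neg hx.le, ← Real.inv_rpow hx.le]
  have key : 1 - x ≤ x⁻¹ - 1 := by
    have hdiff : x⁻¹ - 1 - (1 - x) = (x - 1) ^ 2 / x := by field_simp; ring
    nlinarith [div_nonneg (sq_nonneg (x - 1)) hx.le]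
  calc 1 + et * (1 - x) ≤ 1 + et * (x⁻¹ - 1) := by nlinarith
    _ ≤ x⁻¹ ^ et := hber
    _ = x ^ (-et) := hxe

lemma tangent (et b b0 : ℝ) (he : 1 ≤ et) (hb : 0 < b) (hb0 : 0 < b0) :
    b0 ^ (-et) + et * b0 ^ (-et - 1) * (b0 - b) ≤ b ^ (-et) := by
  have hx : 0 < b / b0 := div_pos hb hb0
  have hber := bern et (b / b0) he hx
  have hpow : (b / b0) ^ (-et) = b ^ (-et) / b0 ^ (-et) := Real.div_rpow hb.le hb0.le _
  rw [hpow] at hber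
  have hp0 : 0 < b0 ^ (-et) := Real.rpow_pos_of_pos hb0 _
  have hmul := mul_le_mul_of_nonneg_left hber hp0.le
  have h2 : b0 ^ (-et) * (b ^ (-et) / b0 ^ (-et)) = b ^ (-et) := by field_simp
  rw [h2] at hmul
  have e1 : b0 ^ (-et - 1) = b0 ^ (-et) / b0 := by
    rw [Real.rpow_sub hb0, Real.rpow_one]
  rw [e1]
  have heq : b0 ^ (-et) * (1 + et * (1 - b / b0)) =
      b0 ^ (-et) + et * (b0 ^ (-et) / b0) * (b0 - b) := by
    field_simp
  linarith [heq ▸ hmul]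

/-- In dimension one, the function `F₀(q) = inf_{γ<0} {Σ*(γ) q + c_β*(γ)}` equals
`σ² q` if `λ q ≤ 1` and `(σ²/(λη))((1+η)(λq)^{η/(1+η)} - 1)` if `λ q > 1`,
provided `(λq)^{-1/(η+1)} ≥ Bmin` whenever `λ q > 1`. -/
theorem stmt3 (σ lmb et Bmin : ℝ) (hσ : 0 < σ) (hl : 0 < lmb) (he : 1 < et)
    (hB : Bmin ∈ Set.Ioo (0 : ℝ) 1) (q : ℝ) (hq : 0 ≤ q)
    (hcase : 1 < lmb * q → Bmin ≤ (lmb * q) ^ (-(1 / (et + 1)))) :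
    let bstar : ℝ → ℝ :=
      fun γ => min 1 (max ((lmb * max (-γ) 0) ^ (-(1 / (et + 1)))) Bmin)
    let Sigs : ℝ → ℝ := fun γ => σ ^ 2 * bstar γ
    let cβs : ℝ → ℝ := fun γ => σ ^ 2 / (lmb * et) * ((bstar γ) ^ (-et) - 1)
    sInf {x | ∃ γ < (0 : ℝ), x = Sigs γ * q + cβs γ} =
      if lmb * q ≤ 1 then σ ^ 2 * q
      else σ ^ 2 / (lmb * et) * ((1 + et) * (lmb * q) ^ (et / (1 + et)) - 1) := by
  intro bstar Sigs cβs
  have hσ2 : (0:ℝ) < σ ^ 2 := by positivity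
  have het0 : (0:ℝ) < et := by linarith
  have hlet : (0:ℝ) < lmb * et := by positivity
  have hbB : ∀ γ : ℝ, Bmin ≤ bstar γ :=
    fun γ => le_min hB.2.le (le_max_right _ _)
  have hb1 : ∀ γ : ℝ, bstar γ ≤ 1 := fun γ => min_le_left _ _
  have hb0pos : ∀ γ : ℝ, 0 < bstar γ := fun γ => lt_of_lt_of_le hB.1 (hbB γ)
  split_ifs with hle
  · -- case lmb * q ≤ 1
    apply IsLeast.csInf_eq
    constructor
    · refine ⟨-lmb⁻¹, by simpa using inv_pos.mpr hl, ?_⟩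
      have hbv : bstar (-lmb⁻¹) = 1 := by
        show min 1 (max ((lmb * max (-(-lmb⁻¹)) 0) ^ (-(1 / (et + 1)))) Bmin) = 1
        rw [neg_neg, max_eq_left (inv_pos.mpr hl).le, mul_inv_cancel₀ hl.ne',
          Real.one_rpow, max_eq_left hB.2.le, min_self]
      show σ ^ 2 * q = σ ^ 2 * bstar (-lmb⁻¹) * q +
        σ ^ 2 / (lmb * et) * ((bstar (-lmb⁻¹)) ^ (-et) - 1)
      rw [hbv, Real.one_rpow]; ring
    · rintro x ⟨γ, hγ, rfl⟩
      set b := bstar γ with hbdef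
      have hb : 0 < b := hb0pos γ
      have hbern := bern et b he.le hb
      show σ ^ 2 * q ≤ σ ^ 2 * b * q + σ ^ 2 / (lmb * et) * (b ^ (-et) - 1)
      have h1 : σ ^ 2 / (lmb * et) * (et * (1 - b)) ≤
          σ ^ 2 / (lmb * et) * (b ^ (-et) - 1) := by
        apply mul_le_mul_of_nonneg_left _ (by positivity)
        linarith
      have h2 : σ ^ 2 / (lmb * et) * (et * (1 - b)) = σ ^ 2 / lmb * (1 - b) := by
        field_simp
      have hq' : q ≤ 1 / lmb := (le_div_iff₀ hl).mpr (by linarith [mul_comm lmb q])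
      have h3 : σ ^ 2 * q * (1 - b) ≤ σ ^ 2 / lmb * (1 - b) := by
        apply mul_le_mul_of_nonneg_right _ (by linarith [hb1 γ])
        calc σ ^ 2 * q ≤ σ ^ 2 * (1 / lmb) := by
              exact mul_le_mul_of_nonneg_left hq' hσ2.le
          _ = σ ^ 2 / lmb := by ring
      nlinarith
  · -- case 1 < lmb * q
    push_neg at hle
    have hlq : (0:ℝ) < lmb * q := by linarith
    have hq0 : 0 < q := by
      rcases hq.lt_or_eq with h | h
      · exact h
      · rw [← h, mul_zero] at hlq; linarith
    set b0 : ℝ := (lmb * q) ^ (-(1 / (et + 1))) with hb0def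
    have hb0pos' : 0 < b0 := Real.rpow_pos_of_pos hlq _
    have hb0le1 : b0 ≤ 1 := by
      apply Real.rpow_le_one_of_one_le_of_nonpos hle.le
      have h01 : (0:ℝ) < 1 / (et + 1) := by positivity
      linarith
    have he1 : et + 1 ≠ 0 := by positivity
    have hA : b0 ^ (-et) = (lmb * q) ^ (et / (et + 1)) := by
      rw [hb0def, ← Real.rpow_mul hlq.le]
      congr 1; field_simp
    have hB1 : lmb * q * b0 = (lmb * q) ^ (et / (et + 1)) := by
      have h := (Real.rpow_add hlq 1 (-(1 / (et + 1)))).symm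
      rw [Real.rpow_one] at h
      rw [hb0def, h]
      congr 1; field_simp; ring
    have hC : b0 ^ (-et - 1) = lmb * q := by
      rw [hb0def, ← Real.rpow_mul hlq.le]
      rw [show (-(1 / (et + 1))) * (-et - 1) = 1 by field_simp; ring, Real.rpow_one]
    have hbq : σ ^ 2 * b0 * q = σ ^ 2 * ((lmb * q) ^ (et / (et + 1))) / lmb := by
      rw [← hB1]; field_simp
    have hval : σ ^ 2 / (lmb * et) * ((1 + et) * (lmb * q) ^ (et / (1 + et)) - 1) =
        σ ^ 2 * b0 * q + σ ^ 2 / (lmb * et) * (b0 ^ (-et) - 1) := by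
      rw [hA, show et / (1 + et) = et / (et + 1) by rw [add_comm], hbq]
      field_simp; ring
    apply IsLeast.csInf_eq
    constructor
    · refine ⟨-q, by simpa using hq0, ?_⟩
      have hbv : bstar (-q) = b0 := by
        show min 1 (max ((lmb * max (-(-q)) 0) ^ (-(1 / (et + 1)))) Bmin) = b0
        rw [neg_neg, max_eq_left hq, max_eq_left (hcase hle), min_eq_right hb0le1]
      show σ ^ 2 / (lmb * et) * ((1 + et) * (lmb * q) ^ (et / (1 + et)) - 1) =
        σ ^ 2 * bstar (-q) * q + σ ^ 2 / (lmb * et) * ((bstar (-q)) ^ (-et) - 1)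
      rw [hbv, hval]
    · rintro x ⟨γ, hγ, rfl⟩
      set b := bstar γ with hbdef
      have hb : 0 < b := hb0pos γ
      have htan := tangent et b b0 he.le hb hb0pos'
      rw [hC] at htan
      show σ ^ 2 / (lmb * et) * ((1 + et) * (lmb * q) ^ (et / (1 + et)) - 1) ≤
        σ ^ 2 * b * q + σ ^ 2 / (lmb * et) * (b ^ (-et) - 1)
      rw [hval]
      have h1 : σ ^ 2 / (lmb * et) * (b0 ^ (-et) + et * (lmb * q) * (b0 - b) - 1) ≤
          σ ^ 2 / (lmb * et) * (b ^ (-et) - 1) := by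
        apply mul_le_mul_of_nonneg_left _ (by positivity)
        linarith
      have h2 : σ ^ 2 / (lmb * et) * (b0 ^ (-et) + et * (lmb * q) * (b0 - b) - 1) =
          σ ^ 2 / (lmb * et) * (b0 ^ (-et) - 1) + σ ^ 2 * q * (b0 - b) := by
        field_simp; ring
      nlinarith
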